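/- Let X be a nonempty compact metric space and μ a finite Borel measure on X with full support (μ(U) > 0 for every nonempty open U ⊆ X). Let u, w : X → ℝ be continuous with min u = 0, max u = l > 0 and min w = 0. For t ∈ [0,1] set h_t := min(t·l, u) + w and g(t) := ∫_X normalize(h_t) dμ. If there exists δ ∈ (0,1] such that g is strictly increasing on [0, δ], then g is strictly increasing on all of [0,1]. Likewise, if there exists δ ∈ (0,1] such that t ↦ osc(h_t) is strictly increasing on [0, δ], then t ↦ osc(h_t) is monotone nondecreasing on all of [0,1]. -/
import Mathlib


open MeasureTheory Set

/-- The (attained) minimum of `f` on a nonempty compact space. -/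
noncomputable def minF {X : Type*} (f : X → ℝ) : ℝ := sInf (Set.range f)

/-- The (attained) maximum of `f` on a nonempty compact space. -/
noncomputable def maxF {X : Type*} (f : X → ℝ) : ℝ := sSup (Set.range f)

/-- The oscillation `max f - min f`. -/
noncomputable def oscF {X : Type*} (f : X → ℝ) : ℝ := maxF f - minF f

/-- `normalize f = f - min f`. -/
noncomputable def normF {X : Type*} (f : X → ℝ) : X → ℝ := fun x => f x - minF f

/-- The minimizer set of `f`. -/
def argminF {X : Type*} (f : X → ℝ) : Set X := {x | f x = minF f}

/-- The maximizer set of `f`. -/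
def argmaxF {X : Type*} (f : X → ℝ) : Set X := {x | f x = maxF f}

section aux

set_option linter.unusedSectionVars false

variable {X : Type*} [MetricSpace X] [CompactSpace X] [Nonempty X]

lemma minF_le' {f : X → ℝ} (hf : Continuous f) (x : X) : minF f ≤ f x :=
  csInf_le (isCompact_range hf).bddBelow (mem_range_self x)

lemma le_maxF' {f : X → ℝ} (hf : Continuous f) (x : X) : f x ≤ maxF f :=
  le_csSup (isCompact_range hf).bddAbove (mem_range_self x)

lemma exists_minF' {f : X → ℝ} (hf : Continuous f) : ∃ x, f x = minF f :=
  (isCompact_range hf).sInf_mem (range_nonempty f)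

lemma exists_maxF' {f : X → ℝ} (hf : Continuous f) : ∃ x, f x = maxF f :=
  (isCompact_range hf).sSup_mem (range_nonempty f)

lemma le_minF' {f : X → ℝ} {a : ℝ} (h : ∀ x, a ≤ f x) : a ≤ minF f :=
  le_csInf (range_nonempty f) (by rintro y ⟨x, rfl⟩; exact h x)

lemma maxF_le' {f : X → ℝ} {a : ℝ} (h : ∀ x, f x ≤ a) : maxF f ≤ a :=
  csSup_le (range_nonempty f) (by rintro y ⟨x, rfl⟩; exact h x)

end aux

theorem stmt_10 {X : Type*} [MetricSpace X] [CompactSpace X] [Nonempty X]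
    [MeasurableSpace X] [BorelSpace X]
    (μ : Measure X) [IsFiniteMeasure μ]
    (hfull : ∀ U : Set X, IsOpen U → U.Nonempty → 0 < μ U)
    (u w : X → ℝ) (hu : Continuous u) (hw : Continuous w)
    (l : ℝ) (hl : 0 < l) (humin : minF u = 0) (humax : maxF u = l)
    (hwmin : minF w = 0) :
    ((∃ δ ∈ Set.Ioc (0:ℝ) 1,
        StrictMonoOn
          (fun t => ∫ x, normF (fun x => min (t * l) (u x) + w x) x ∂μ)
          (Set.Icc (0:ℝ) δ)) →
      StrictMonoOn
        (fun t => ∫ x, normF (fun x => min (t * l) (u x) + w x) x ∂μ)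
        (Set.Icc (0:ℝ) 1)) ∧
    ((∃ δ ∈ Set.Ioc (0:ℝ) 1,
        StrictMonoOn (fun t => oscF (fun x => min (t * l) (u x) + w x))
          (Set.Icc (0:ℝ) δ)) →
      MonotoneOn (fun t => oscF (fun x => min (t * l) (u x) + w x))
        (Set.Icc (0:ℝ) 1)) := by
  have hu0 : ∀ x, 0 ≤ u x := fun x => humin ▸ minF_le' hu x
  have hw0 : ∀ x, 0 ≤ w x := fun x => hwmin ▸ minF_le' hw x
  have hcont : ∀ t : ℝ, Continuous (fun x => min (t * l) (u x) + w x) :=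
    fun t => (continuous_const.min hu).add hw
  have hint : ∀ f : X → ℝ, Continuous f → Integrable f μ := by
    intro f hf
    have := hf.continuousOn.integrableOn_compact' (μ := μ) isCompact_univ MeasurableSet.univ
    rwa [integrableOn_univ] at this
  set c : ℝ := minF (fun x => u x + w x) with hcdef
  have hc0 : 0 ≤ c := le_minF' (fun x => add_nonneg (hu0 x) (hw0 x))
  have hcuw : Continuous fun x => u x + w x := hu.add hw
  -- If 0 ≤ t and t*l ≤ c, then minF is t*l
  have hminht : ∀ t : ℝ, 0 ≤ t → t * l ≤ c →
      minF (fun x => min (t * l) (u x) + w x) = t * l := by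
    intro t ht htc
    obtain ⟨xw, hxw⟩ := exists_minF' hw
    have hwx : w xw = 0 := by rw [hxw, hwmin]
    have hle : minF (fun x => min (t * l) (u x) + w x) ≤ t * l := by
      have := minF_le' (hcont t) xw
      calc minF (fun x => min (t * l) (u x) + w x) ≤ min (t * l) (u xw) + w xw := this
        _ ≤ t * l := by rw [hwx, add_zero]; exact min_le_left _ _
    have hge : t * l ≤ minF (fun x => min (t * l) (u x) + w x) := by
      apply le_minF'
      intro x
      rcases le_total (u x) (t * l) with hc1 | hc1
      · have h2 : c ≤ u x + w x := minF_le' hcuw x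
        rw [min_eq_right hc1]; linarith
      · rw [min_eq_left hc1]; linarith [hw0 x]
    linarith
  -- if c = 0 the minimum of h t is 0 for all t ≥ 0
  have hm0 : c = 0 → ∀ t : ℝ, 0 ≤ t →
      minF (fun x => min (t * l) (u x) + w x) = 0 := by
    intro hc t ht
    obtain ⟨x0, hx0⟩ := exists_minF' hcuw
    have hx0' : u x0 + w x0 = 0 := by rw [hx0, ← hcdef, hc]
    have hux0 : u x0 = 0 := le_antisymm (by linarith [hw0 x0]) (hu0 x0)
    have hwx0 : w x0 = 0 := by linarith
    have hle : minF (fun x => min (t * l) (u x) + w x) ≤ 0 := by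
      have := minF_le' (hcont t) x0
      rw [hux0, hwx0, add_zero] at this
      calc minF (fun x => min (t * l) (u x) + w x) ≤ min (t * l) 0 := this
        _ ≤ 0 := min_le_right _ _
    have hge : (0:ℝ) ≤ minF (fun x => min (t * l) (u x) + w x) :=
      le_minF' fun x => add_nonneg (le_min (by positivity) (hu0 x)) (hw0 x)
    linarith
  have hminh0 : minF (fun x => min ((0:ℝ) * l) (u x) + w x) = 0 := by
    simpa using hminht 0 le_rfl (by simpa using hc0)
  constructor
  · -- integral statement
    rintro ⟨δ, ⟨hδ0, hδ1⟩, hsm⟩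
    have hc : c = 0 := by
      by_contra hne
      have hcpos : 0 < c := lt_of_le_of_ne hc0 (Ne.symm hne)
      set t0 : ℝ := min δ (c / l) with ht0def
      have ht0pos : 0 < t0 := lt_min hδ0 (div_pos hcpos hl)
      have ht0δ : t0 ≤ δ := min_le_left _ _
      have ht0c : t0 * l ≤ c := by
        have h1 : t0 ≤ c / l := min_le_right _ _
        calc t0 * l ≤ (c / l) * l := by gcongr
          _ = c := div_mul_cancel₀ _ (ne_of_gt hl)
      have hlt := hsm (left_mem_Icc.2 (le_trans ht0pos.le ht0δ))
        ⟨ht0pos.le, ht0δ⟩ ht0pos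
      simp only at hlt
      have hminht0 := hminht t0 ht0pos.le ht0c
      have hle : (∫ x, normF (fun x => min (t0 * l) (u x) + w x) x ∂μ)
          ≤ ∫ x, normF (fun x => min ((0:ℝ) * l) (u x) + w x) x ∂μ := by
        apply integral_mono
        · exact hint _ ((hcont t0).sub continuous_const)
        · exact hint _ ((hcont 0).sub continuous_const)
        · intro x
          simp only [normF, hminh0, hminht0, sub_zero]
          have h1 : min (t0 * l) (u x) ≤ t0 * l := min_le_left _ _
          have h2 : min ((0:ℝ) * l) (u x) = 0 * l := min_eq_left (by simpa using hu0 x)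
          rw [h2]; linarith
      exact absurd hlt (not_lt.2 hle)
    intro s hs t ht hst
    show (∫ x, normF (fun x => min (s * l) (u x) + w x) x ∂μ)
        < ∫ x, normF (fun x => min (t * l) (u x) + w x) x ∂μ
    have hms := hm0 hc s hs.1
    have hmt := hm0 hc t (hs.1.trans hst.le)
    have hdcont : Continuous fun x =>
        (min (t * l) (u x) + w x) - (min (s * l) (u x) + w x) := (hcont t).sub (hcont s)
    have hdnn : ∀ x, 0 ≤ (min (t * l) (u x) + w x) - (min (s * l) (u x) + w x) := by
      intro x
      have : min (s * l) (u x) ≤ min (t * l) (u x) :=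
        min_le_min (by nlinarith) le_rfl
      linarith
    have hpos : 0 < ∫ x, ((min (t * l) (u x) + w x) - (min (s * l) (u x) + w x)) ∂μ := by
      rw [integral_pos_iff_support_of_nonneg hdnn (hint _ hdcont)]
      set U : Set X := {x | s * l < u x} with hU
      have hUopen : IsOpen U := isOpen_lt continuous_const hu
      have hUne : U.Nonempty := by
        obtain ⟨x1, hx1⟩ := exists_maxF' hu
        have hux1 : u x1 = l := by rw [hx1, humax]
        exact ⟨x1, by simp only [hU, mem_setOf_eq, hux1]; nlinarith [hs.1, ht.2, hst]⟩
      have hsub : U ⊆ Function.support fun x =>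
          (min (t * l) (u x) + w x) - (min (s * l) (u x) + w x) := by
        intro x hx
        simp only [hU, mem_setOf_eq] at hx
        have hmins : min (s * l) (u x) = s * l := min_eq_left hx.le
        have hmint : s * l < min (t * l) (u x) := lt_min (by nlinarith) hx
        simp only [Function.mem_support]
        intro hcontra
        rw [hmins] at hcontra
        nlinarith
      calc (0 : ENNReal) < μ U := hfull U hUopen hUne
        _ ≤ μ _ := measure_mono hsub
    have heq1 : (∫ x, normF (fun x => min (t * l) (u x) + w x) x ∂μ)
        = ∫ x, (min (t * l) (u x) + w x) ∂μ := by
      congr 1; funext x; simp [normF, hmt]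
    have heq2 : (∫ x, normF (fun x => min (s * l) (u x) + w x) x ∂μ)
        = ∫ x, (min (s * l) (u x) + w x) ∂μ := by
      congr 1; funext x; simp [normF, hms]
    rw [heq1, heq2]
    have := integral_sub (hint _ (hcont t)) (hint _ (hcont s))
    rw [this] at hpos
    linarith
  · -- oscillation statement
    rintro ⟨δ, ⟨hδ0, hδ1⟩, hsm⟩
    have hc : c = 0 := by
      by_contra hne
      have hcpos : 0 < c := lt_of_le_of_ne hc0 (Ne.symm hne)
      set t0 : ℝ := min δ (c / l) with ht0def
      have ht0pos : 0 < t0 := lt_min hδ0 (div_pos hcpos hl)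
      have ht0δ : t0 ≤ δ := min_le_left _ _
      have ht0c : t0 * l ≤ c := by
        have h1 : t0 ≤ c / l := min_le_right _ _
        calc t0 * l ≤ (c / l) * l := by gcongr
          _ = c := div_mul_cancel₀ _ (ne_of_gt hl)
      have hlt := hsm (left_mem_Icc.2 (le_trans ht0pos.le ht0δ))
        ⟨ht0pos.le, ht0δ⟩ ht0pos
      simp only at hlt
      have hminht0 := hminht t0 ht0pos.le ht0c
      have hmaxle : maxF (fun x => min (t0 * l) (u x) + w x)
          ≤ maxF (fun x => min ((0:ℝ) * l) (u x) + w x) + t0 * l := by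
        apply maxF_le'
        intro x
        have h1 : min (t0 * l) (u x) ≤ t0 * l := min_le_left _ _
        have h2 : min ((0:ℝ) * l) (u x) = 0 * l := min_eq_left (by simpa using hu0 x)
        have h3 : min ((0:ℝ) * l) (u x) + w x ≤ maxF (fun x => min ((0:ℝ) * l) (u x) + w x) :=
          le_maxF' (hcont 0) x
        rw [h2] at h3
        linarith
      have hle : oscF (fun x => min (t0 * l) (u x) + w x)
          ≤ oscF (fun x => min ((0:ℝ) * l) (u x) + w x) := by
        simp only [oscF, hminh0, hminht0]
        linarith
      exact absurd hlt (not_lt.2 hle)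
    intro s hs t ht hst
    show oscF (fun x => min (s * l) (u x) + w x) ≤ oscF (fun x => min (t * l) (u x) + w x)
    have hms := hm0 hc s hs.1
    have hmt := hm0 hc t ht.1
    have hmax : maxF (fun x => min (s * l) (u x) + w x)
        ≤ maxF (fun x => min (t * l) (u x) + w x) := by
      apply maxF_le'
      intro x
      have h1 : min (s * l) (u x) ≤ min (t * l) (u x) :=
        min_le_min (by nlinarith) le_rfl
      have h2 := le_maxF' (hcont t) x
      linarith
    simp only [oscF, hms, hmt]
    linarith
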